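/- If G is a hypo-efficient-domination graph of order n, then 2 ≤ γ(G) ≤ n/2, and γ(G) = n/2 holds if and only if G is isomorphic to the 4-cycle C_4. -/

import Mathlib

open SimpleGraph

variable {V : Type*}

/-- `D` is a dominating set of `G`. -/
def IsDomSet (G : SimpleGraph V) (D : Finset V) : Prop :=
  ∀ v : V, ∃ u ∈ D, u = v ∨ G.Adj u v

/-- The domination number `γ(G)`. -/
noncomputable def domNum (G : SimpleGraph V) : ℕ :=
  sInf {n | ∃ D : Finset V, IsDomSet G D ∧ D.card = n}

/-- `D` is a minimum dominating set (γ-set) of `G`. -/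
def IsGammaSet (G : SimpleGraph V) (D : Finset V) : Prop :=
  IsDomSet G D ∧ D.card = domNum G

/-- The graph `G - x` obtained by deleting the vertex `x`. -/
def vdel (G : SimpleGraph V) (x : V) : SimpleGraph {u : V // u ≠ x} :=
  SimpleGraph.comap Subtype.val G

/-- `G` is a hypo-unique-domination graph: `G` has at least two γ-sets,
but `G - x` has a unique γ-set for every vertex `x`. -/
def HypoUD (G : SimpleGraph V) : Prop :=
  (∃ D₁ D₂ : Finset V, IsGammaSet G D₁ ∧ IsGammaSet G D₂ ∧ D₁ ≠ D₂) ∧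
  ∀ x : V, ∃! D : Finset {u : V // u ≠ x}, IsGammaSet (vdel G x) D

/-- `D` is an efficient dominating set of `G`: every vertex is dominated exactly once. -/
def IsEDS (G : SimpleGraph V) (D : Finset V) : Prop :=
  ∀ v : V, ∃! u : V, u ∈ D ∧ (u = v ∨ G.Adj u v)

/-- `G` is a hypo-efficient-domination graph: `G` has no EDS,
but `G - x` has an EDS for every vertex `x`. -/
def HypoED (G : SimpleGraph V) : Prop :=
  (¬ ∃ D : Finset V, IsEDS G D) ∧
  ∀ x : V, ∃ D : Finset {u : V // u ≠ x}, IsEDS (vdel G x) D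

open Finset

lemma vdel_adj {G : SimpleGraph V} {x : V} {a b : {u : V // u ≠ x}} :
    (vdel G x).Adj a b ↔ G.Adj ↑a ↑b := Iff.rfl

section arith
variable {W : Type*} [DecidableEq W]

lemma sum_all_two {s : Finset W} {f : W → ℕ} (h2 : ∀ a ∈ s, 2 ≤ f a)
    (hsum : ∑ a ∈ s, f a = 2 * s.card) : ∀ a ∈ s, f a = 2 := by
  by_contra hc
  push_neg at hc
  obtain ⟨a, ha, hfa⟩ := hc
  have h3 : 3 ≤ f a := by have := h2 a ha; omega
  have hsub : (s.erase a).card • 2 ≤ ∑ b ∈ s.erase a, f b :=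
    Finset.card_nsmul_le_sum _ _ _ (fun b hb => h2 b (Finset.mem_of_mem_erase hb))
  rw [smul_eq_mul] at hsub
  have hadd : ∑ b ∈ s.erase a, f b + f a = ∑ a ∈ s, f a := Finset.sum_erase_add s f ha
  have hcard : (s.erase a).card = s.card - 1 := Finset.card_erase_of_mem ha
  have h1 : 1 ≤ s.card := Finset.card_pos.2 ⟨a, ha⟩
  omega

lemma sum_two_plus_one {s : Finset W} {f : W → ℕ} (h2 : ∀ a ∈ s, 2 ≤ f a)
    (hsum : ∑ a ∈ s, f a = 2 * s.card + 1) :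
    ∃ a ∈ s, f a = 3 ∧ ∀ b ∈ s, b ≠ a → f b = 2 := by
  have hex : ∃ a ∈ s, 3 ≤ f a := by
    by_contra hc
    push_neg at hc
    have : ∑ a ∈ s, f a ≤ s.card • 2 := Finset.sum_le_card_nsmul _ _ _ (fun b hb => by
      have := hc b hb; omega)
    rw [smul_eq_mul] at this
    omega
  obtain ⟨a, ha, h3⟩ := hex
  have hsub : (s.erase a).card • 2 ≤ ∑ b ∈ s.erase a, f b :=
    Finset.card_nsmul_le_sum _ _ _ (fun b hb => h2 b (Finset.mem_of_mem_erase hb))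
  rw [smul_eq_mul] at hsub
  have hadd : ∑ b ∈ s.erase a, f b + f a = ∑ a ∈ s, f a := Finset.sum_erase_add s f ha
  have hcard : (s.erase a).card = s.card - 1 := Finset.card_erase_of_mem ha
  have h1 : 1 ≤ s.card := Finset.card_pos.2 ⟨a, ha⟩
  have hfa : f a = 3 := by omega
  refine ⟨a, ha, hfa, ?_⟩
  have herase : ∀ b ∈ s.erase a, f b = 2 := by
    apply sum_all_two (fun b hb => h2 b (Finset.mem_of_mem_erase hb))
    omega
  intro b hb hba
  exact herase b (Finset.mem_erase.2 ⟨hba, hb⟩)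

lemma exists_le_one {s : Finset W} {f : W → ℕ}
    (hsum : ∑ a ∈ s, f a < 2 * s.card) : ∃ a ∈ s, f a ≤ 1 := by
  by_contra hc
  push_neg at hc
  have : s.card • 2 ≤ ∑ a ∈ s, f a :=
    Finset.card_nsmul_le_sum _ _ _ (fun b hb => hc b hb)
  rw [smul_eq_mul] at this
  omega

end arith

section basic
variable {W : Type*}

lemma domNum_exists [Fintype W] (H : SimpleGraph W) :
    ∃ D : Finset W, IsDomSet H D ∧ D.card = domNum H :=
  Nat.sInf_mem (⟨(Finset.univ : Finset W).card, Finset.univ,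
    fun v => ⟨v, Finset.mem_univ v, Or.inl rfl⟩, rfl⟩ :
      Set.Nonempty {n | ∃ D : Finset W, IsDomSet H D ∧ D.card = n})

lemma domNum_le [Fintype W] (H : SimpleGraph W) {D : Finset W} (hD : IsDomSet H D) :
    domNum H ≤ D.card := Nat.sInf_le ⟨D, hD, rfl⟩

/-- An EDS is no larger than any dominating set. -/
lemma eds_card_le [Fintype W] (H : SimpleGraph W) {D S : Finset W}
    (hD : IsEDS H D) (hS : IsDomSet H S) : D.card ≤ S.card := by
  classical
  refine Finset.card_le_card_of_injOn (fun d => (hS d).choose) (fun d _ => (hS d).choose_spec.1) ?_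
  intro d hd d' hd' heq
  simp only [Finset.mem_coe] at hd hd'
  dsimp only at heq
  have h1 : (hS d).choose = d ∨ H.Adj (hS d).choose d := (hS d).choose_spec.2
  have h2 : (hS d).choose = d' ∨ H.Adj (hS d).choose d' := by
    rw [heq]; exact (hS d').choose_spec.2
  obtain ⟨c, _, hcu⟩ := hD ((hS d).choose)
  have hd1 : d = c := by
    refine hcu d ⟨hd, ?_⟩
    rcases h1 with h | h
    · exact Or.inl h.symm
    · exact Or.inr (H.adj_symm h)
  have hd2 : d' = c := by
    refine hcu d' ⟨hd', ?_⟩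
    rcases h2 with h | h
    · exact Or.inl h.symm
    · exact Or.inr (H.adj_symm h)
  rw [hd1, hd2]

/-- Counting identity: closed neighbourhoods of an EDS partition the vertex set. -/
lemma eds_sum [Fintype W] [DecidableEq W] (H : SimpleGraph W) [DecidableRel H.Adj]
    (D : Finset W) (hD : IsEDS H D) :
    ∑ d ∈ D, (Finset.univ.filter (fun v => d = v ∨ H.Adj d v)).card = Fintype.card W := by
  have hf : ∀ v : W, (hD v).choose ∈ D := fun v => (hD v).choose_spec.1.1
  have key := Finset.card_eq_sum_card_fiberwise (f := fun v => (hD v).choose)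
      (s := Finset.univ) (t := D) (fun v _ => hf v)
  rw [Finset.card_univ] at key
  rw [key]
  refine Finset.sum_congr rfl (fun d hd => ?_)
  congr 1
  apply Finset.filter_congr
  intro v _
  dsimp only
  constructor
  · intro hcov
    exact ((hD v).choose_spec.2 d ⟨hd, hcov⟩).symm
  · intro hc
    have h2 := (hD v).choose_spec.1.2
    rw [hc] at h2
    exact h2

end basic
section layer2
variable [Fintype V] [DecidableEq V] (G : SimpleGraph V)

lemma two_le_domNum' (hne : ¬ ∃ D : Finset V, IsEDS G D) : 2 ≤ domNum G := by
  have hV : Nonempty V := by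
    by_contra hV
    rw [not_nonempty_iff] at hV
    exact hne ⟨∅, fun v => (IsEmpty.false v).elim⟩
  obtain ⟨D, hD, hcard⟩ := domNum_exists G
  by_contra hlt
  push_neg at hlt
  interval_cases h : domNum G
  · rw [Finset.card_eq_zero] at hcard
    subst hcard
    obtain ⟨u, hu, -⟩ := hD (Classical.arbitrary V)
    exact absurd hu (Finset.notMem_empty u)
  · rw [Finset.card_eq_one] at hcard
    obtain ⟨u, rfl⟩ := hcard
    refine hne ⟨{u}, fun v => ?_⟩
    obtain ⟨w, hw, hcov⟩ := hD v
    rw [Finset.mem_singleton] at hw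
    subst hw
    refine ⟨w, ⟨Finset.mem_singleton_self w, hcov⟩, ?_⟩
    rintro y ⟨hy, -⟩
    exact Finset.mem_singleton.1 hy

lemma hypoED_no_isolated (h : HypoED G) : ∀ v : V, ∃ w, G.Adj v w := by
  intro v
  by_contra hno
  push_neg at hno
  obtain ⟨D, hD⟩ := h.2 v
  apply h.1
  refine ⟨insert v (D.image Subtype.val), fun w => ?_⟩
  by_cases hw : w = v
  · subst hw
    refine ⟨w, ⟨Finset.mem_insert_self _ _, Or.inl rfl⟩, ?_⟩
    rintro y ⟨hy, hcov⟩
    rcases Finset.mem_insert.1 hy with rfl | hy'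
    · rfl
    · rcases hcov with rfl | hadj
      · rfl
      · exact absurd (G.adj_symm hadj) (hno y)
  · obtain ⟨d, hdP, hduniq⟩ := hD ⟨w, hw⟩
    refine ⟨↑d, ⟨Finset.mem_insert_of_mem (Finset.mem_image_of_mem _ hdP.1), ?_⟩, ?_⟩
    · rcases hdP.2 with h' | h'
      · exact Or.inl (congrArg Subtype.val h')
      · exact Or.inr h'
    · rintro y ⟨hy, hcov⟩
      rcases Finset.mem_insert.1 hy with rfl | hy'
      · rcases hcov with rfl | hadj
        · exact absurd rfl hw
        · exact absurd hadj (hno w)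
      · obtain ⟨u, hu, rfl⟩ := Finset.mem_image.1 hy'
        have hcovu : u = ⟨w, hw⟩ ∨ (vdel G v).Adj u ⟨w, hw⟩ := by
          rcases hcov with h' | h'
          · exact Or.inl (Subtype.ext h')
          · exact Or.inr h'
        rw [hduniq u ⟨hu, hcovu⟩]

/-- Ore: a minimum dominating set whose complement also dominates. -/
lemma ore_compl (hiso : ∀ v : V, ∃ w, G.Adj v w) :
    ∃ D : Finset V, IsDomSet G D ∧ D.card = domNum G ∧ IsDomSet G (Finset.univ \ D) := by
  obtain ⟨D, hD, hcard⟩ := domNum_exists G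
  refine ⟨D, hD, hcard, fun v => ?_⟩
  by_cases hv : v ∈ D
  · have hnotdom : ¬ IsDomSet G (D.erase v) := by
      intro hdom
      have := domNum_le G hdom
      rw [Finset.card_erase_of_mem hv] at this
      have hpos : 0 < D.card := Finset.card_pos.2 ⟨v, hv⟩
      omega
    rw [IsDomSet] at hnotdom
    push_neg at hnotdom
    obtain ⟨w, hw⟩ := hnotdom
    obtain ⟨u₀, hu₀, hcov₀⟩ := hD w
    have huv : u₀ = v := by
      by_contra hne
      rcases hcov₀ with h' | h'
      · exact (hw u₀ (Finset.mem_erase.2 ⟨hne, hu₀⟩)).1 h'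
      · exact (hw u₀ (Finset.mem_erase.2 ⟨hne, hu₀⟩)).2 h'
    rw [huv] at hcov₀
    rcases hcov₀ with hvw | hadj
    · -- v = w : no other member covers v; use a neighbour
      subst hvw
      obtain ⟨z, hz⟩ := hiso v
      have hzD : z ∉ D := by
        intro hzD
        have hzv : z ≠ v := fun hzz => G.irrefl (hzz ▸ hz)
        exact (hw z (Finset.mem_erase.2 ⟨hzv, hzD⟩)).2 (G.adj_symm hz)
      exact ⟨z, Finset.mem_sdiff.2 ⟨Finset.mem_univ z, hzD⟩, Or.inr (G.adj_symm hz)⟩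
    · -- v ≠ w, Adj v w : w ∉ D, w covers v
      have hvw : v ≠ w := fun hvw => G.irrefl (hvw ▸ hadj)
      have hwD : w ∉ D := by
        intro hwD
        exact (hw w (Finset.mem_erase.2 ⟨fun hh => hvw hh.symm, hwD⟩)).1 rfl
      exact ⟨w, Finset.mem_sdiff.2 ⟨Finset.mem_univ w, hwD⟩, Or.inr (G.adj_symm hadj)⟩
  · exact ⟨v, Finset.mem_sdiff.2 ⟨Finset.mem_univ v, hv⟩, Or.inl rfl⟩

lemma two_mul_domNum_le (hiso : ∀ v : V, ∃ w, G.Adj v w) :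
    2 * domNum G ≤ Fintype.card V := by
  obtain ⟨D, hD, hcard, hcompl⟩ := ore_compl G hiso
  have h1 := domNum_le G hcompl
  have h2 : (Finset.univ \ D).card = Fintype.card V - D.card := by
    rw [Finset.card_sdiff_of_subset (Finset.subset_univ D), Finset.card_univ]
  have h3 : D.card ≤ Fintype.card V := by
    rw [← Finset.card_univ]; exact Finset.card_le_card (Finset.subset_univ D)
  omega

/-- Under equality, for every `x` there is a γ-sized dominating set avoiding `x`. -/
lemma avoid_dom (hiso : ∀ v : V, ∃ w, G.Adj v w)
    (heq : 2 * domNum G = Fintype.card V) (x : V) :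
    ∃ S : Finset V, IsDomSet G S ∧ S.card = domNum G ∧ x ∉ S := by
  obtain ⟨D, hD, hcard, hcompl⟩ := ore_compl G hiso
  by_cases hx : x ∈ D
  · refine ⟨Finset.univ \ D, hcompl, ?_, ?_⟩
    · rw [Finset.card_sdiff_of_subset (Finset.subset_univ D), Finset.card_univ, hcard]
      omega
    · rw [Finset.mem_sdiff]
      push_neg
      intro _
      exact hx
  · exact ⟨D, hD, hcard, hx⟩

end layer2
section layer3
variable [Fintype V] [DecidableEq V] (G : SimpleGraph V)

lemma card_subtype_ne (x : V) : Fintype.card {u : V // u ≠ x} = Fintype.card V - 1 := by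
  classical
  have h1 : Fintype.card {u : V // u = x} = 1 := Fintype.card_subtype_eq x
  have h2 := Fintype.card_subtype_compl (fun u : V => u = x)
  rw [h1] at h2
  exact h2

lemma dichotomy (h : HypoED G) (heq : 2 * domNum G = Fintype.card V)
    {x : V} {D : Finset {u : V // u ≠ x}} (hD : IsEDS (vdel G x) D) :
    (D.card + 1 = domNum G ∧ ∀ d ∈ D, ¬ G.Adj ↑d x) ∨
    (D.card = domNum G ∧ ∃ d₀ ∈ D, G.Adj ↑d₀ x ∧ ∀ w : V, G.Adj (↑d₀ : V) w → w = x) := by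
  classical
  have hiso := hypoED_no_isolated G h
  have h2 := two_le_domNum' G h.1
  obtain ⟨S, hS, hScard, hxS⟩ := avoid_dom G hiso heq x
  have hSsub : IsDomSet (vdel G x) (S.subtype (· ≠ x)) := by
    intro v
    obtain ⟨u, hu, hcov⟩ := hS ↑v
    have hux : u ≠ x := fun h' => hxS (h' ▸ hu)
    refine ⟨⟨u, hux⟩, Finset.mem_subtype.2 hu, ?_⟩
    rcases hcov with h' | h'
    · exact Or.inl (Subtype.ext h')
    · exact Or.inr h'
  have hSsubcard : (S.subtype (· ≠ x)).card = domNum G := by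
    have h1 : (S.subtype (· ≠ x)).card = (S.filter (· ≠ x)).card := Finset.card_subtype _ _
    have hf : S.filter (· ≠ x) = S := by
      apply Finset.filter_true_of_mem
      intro u hu
      intro h'
      rw [h'] at hu
      exact hxS hu
    rw [h1, hf, hScard]
  have hub : D.card ≤ domNum G := by
    have := eds_card_le (vdel G x) hD hSsub
    omega
  have hlb : domNum G ≤ D.card + 1 := by
    have hdom : IsDomSet G (insert x (D.image Subtype.val)) := by
      intro v
      by_cases hv : v = x
      · exact ⟨x, Finset.mem_insert_self _ _, Or.inl hv.symm⟩
      · obtain ⟨d, hdP, -⟩ := hD ⟨v, hv⟩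
        refine ⟨↑d, Finset.mem_insert_of_mem (Finset.mem_image_of_mem _ hdP.1), ?_⟩
        rcases hdP.2 with h' | h'
        · exact Or.inl (congrArg Subtype.val h')
        · exact Or.inr h'
    have hd1 := domNum_le G hdom
    have hc2 := Finset.card_image_le (s := D) (f := Subtype.val)
    have hc1 := Finset.card_insert_le x (D.image Subtype.val)
    omega
  rcases eq_or_lt_of_le hub with heqc | hltc
  · right
    refine ⟨heqc, ?_⟩
    haveI : DecidableRel (vdel G x).Adj := fun a b => Classical.dec _
    have hsum := eds_sum (vdel G x) D hD
    have hcardW : Fintype.card {u : V // u ≠ x} = Fintype.card V - 1 := card_subtype_ne x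
    have hlt : ∑ d ∈ D, (Finset.univ.filter (fun v => d = v ∨ (vdel G x).Adj d v)).card
        < 2 * D.card := by
      rw [hsum, hcardW]
      omega
    obtain ⟨d₀, hd₀, hle1⟩ := exists_le_one hlt
    have hmem : d₀ ∈ Finset.univ.filter (fun v => d₀ = v ∨ (vdel G x).Adj d₀ v) :=
      Finset.mem_filter.2 ⟨Finset.mem_univ _, Or.inl rfl⟩
    have hnonbr : ∀ w : {u : V // u ≠ x}, ¬ (vdel G x).Adj d₀ w := by
      intro w hw
      have hwmem : w ∈ Finset.univ.filter (fun v => d₀ = v ∨ (vdel G x).Adj d₀ v) :=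
        Finset.mem_filter.2 ⟨Finset.mem_univ _, Or.inr hw⟩
      have hdw : d₀ ≠ w := fun h' => (vdel G x).irrefl (h' ▸ hw)
      have : 1 < (Finset.univ.filter (fun v => d₀ = v ∨ (vdel G x).Adj d₀ v)).card :=
        Finset.one_lt_card.2 ⟨d₀, hmem, w, hwmem, hdw⟩
      omega
    have hpend : ∀ w : V, G.Adj ↑d₀ w → w = x := by
      intro w hw
      by_contra hwx
      exact hnonbr ⟨w, hwx⟩ hw
    obtain ⟨w, hw⟩ := hiso ↑d₀
    have hwx := hpend w hw
    rw [hwx] at hw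
    exact ⟨d₀, hd₀, hw, hpend⟩
  · left
    have hcardi : D.card + 1 = domNum G := by omega
    refine ⟨hcardi, ?_⟩
    intro d hd hadj
    have hdomim : IsDomSet G (D.image Subtype.val) := by
      intro v
      by_cases hv : v = x
      · exact ⟨↑d, Finset.mem_image_of_mem _ hd, Or.inr (by rw [hv]; exact hadj)⟩
      · obtain ⟨e, heP, -⟩ := hD ⟨v, hv⟩
        refine ⟨↑e, Finset.mem_image_of_mem _ heP.1, ?_⟩
        rcases heP.2 with h' | h'
        · exact Or.inl (congrArg Subtype.val h')
        · exact Or.inr h'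
    have hd1 := domNum_le G hdomim
    have hc2 := Finset.card_image_le (s := D) (f := Subtype.val)
    omega

end layer3
section layer4
variable [Fintype V] [DecidableEq V] (G : SimpleGraph V)

lemma no_pendant (h : HypoED G) (heq : 2 * domNum G = Fintype.card V)
    {p s : V} (hps : G.Adj p s) (hpend : ∀ w, G.Adj p w → w = s) : False := by
  classical
  have hiso := hypoED_no_isolated G h
  have hγ2 := two_le_domNum' G h.1
  obtain ⟨D, hD⟩ := h.2 p
  haveI : DecidableRel (vdel G p).Adj := fun a b => Classical.dec _
  have hcardW : Fintype.card {u : V // u ≠ p} = 2 * domNum G - 1 := by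
    rw [card_subtype_ne]; omega
  have hsum := eds_sum (vdel G p) D hD
  rw [hcardW] at hsum
  set C : {u : V // u ≠ p} → Finset {u : V // u ≠ p} :=
    fun d => Finset.univ.filter (fun v => d = v ∨ (vdel G p).Adj d v) with hC
  have hCmem : ∀ d v, v ∈ C d ↔ (d = v ∨ G.Adj ↑d ↑v) := by
    intro d v
    rw [hC]
    simp only [Finset.mem_filter, Finset.mem_univ, true_and]
    exact Iff.rfl
  have hself : ∀ d, d ∈ C d := fun d => (hCmem d d).2 (Or.inl rfl)
  have huniq : ∀ (v : {u : V // u ≠ p}) d d', d ∈ D → d' ∈ D → v ∈ C d → v ∈ C d' → d = d' := by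
    intro v d d' hd hd' hv hv'
    obtain ⟨c, -, hc⟩ := hD v
    have e1 : d = c := hc d ⟨hd, by
      rcases (hCmem d v).1 hv with h' | h'
      · exact Or.inl h'
      · exact Or.inr h'⟩
    have e2 : d' = c := hc d' ⟨hd', by
      rcases (hCmem d' v).1 hv' with h' | h'
      · exact Or.inl h'
      · exact Or.inr h'⟩
    rw [e1, e2]
  have hsp : s ≠ p := fun h' => G.irrefl (h' ▸ hps)
  rcases dichotomy G h heq hD with ⟨hcard, hnadj⟩ | ⟨hcard, d₀, hd₀D, hd₀adj, hd₀pend⟩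
  · -- case (i): D has γ-1 members, none adjacent to p
    have hge2 : ∀ d ∈ D, 2 ≤ (C d).card := by
      intro d hd
      obtain ⟨w, hw⟩ := hiso ↑d
      have hwp : w ≠ p := fun h' => hnadj d hd (h' ▸ hw)
      have hmem : (⟨w, hwp⟩ : {u : V // u ≠ p}) ∈ C d := (hCmem _ _).2 (Or.inr hw)
      have hne : d ≠ ⟨w, hwp⟩ := fun h' => G.irrefl (by
        have h2 : (↑d : V) = w := congrArg Subtype.val h'
        exact h2 ▸ hw)
      exact Finset.one_lt_card.2 ⟨d, hself d, ⟨w, hwp⟩, hmem, hne⟩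
    have hsumC : ∑ d ∈ D, (C d).card = 2 * domNum G - 1 := hsum
    obtain ⟨dstar, hdstarD, hdstar3, hrest⟩ :=
      sum_two_plus_one hge2 (show ∑ d ∈ D, (C d).card = 2 * D.card + 1 by omega)
    have hnbr : ∀ d ∈ D.erase dstar,
        ∃ r : V, r ≠ p ∧ G.Adj ↑d r ∧ ∀ w : V, G.Adj ↑d w → w = r := by
      intro d hd
      have h2 : (C d).card = 2 := hrest d (Finset.mem_of_mem_erase hd) (Finset.mem_erase.1 hd).1
      obtain ⟨e, he, hed⟩ : ∃ e ∈ C d, e ≠ d := by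
        have h21 : 1 < (C d).card := by omega
        rcases Finset.one_lt_card.1 h21 with ⟨a, ha, b, hb, hab⟩
        by_cases hda : a = d
        · exact ⟨b, hb, fun h' => hab (by rw [hda, h'])⟩
        · exact ⟨a, ha, hda⟩
      have hadj_e : G.Adj ↑d ↑e := by
        rcases (hCmem d e).1 he with h' | h'
        · exact absurd h'.symm hed
        · exact h'
      have hcard2 : ({d, e} : Finset {u : V // u ≠ p}).card = 2 := by
        rw [Finset.card_insert_of_notMem (by
          rw [Finset.mem_singleton]; exact fun h' => hed h'.symm), Finset.card_singleton]
      have hCde : C d = {d, e} := by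
        refine (Finset.eq_of_subset_of_card_le ?_ ?_).symm
        · intro y hy
          rcases Finset.mem_insert.1 hy with rfl | hy'
          · exact hself y
          · rw [Finset.mem_singleton] at hy'
            rw [hy']
            exact (hCmem d e).2 (Or.inr hadj_e)
        · rw [h2, hcard2]
      refine ⟨↑e, e.prop, hadj_e, ?_⟩
      intro w hw
      have hwp : w ≠ p := fun h' => hnadj d (Finset.mem_of_mem_erase hd) (h' ▸ hw)
      have hmem : (⟨w, hwp⟩ : {u : V // u ≠ p}) ∈ C d := (hCmem _ _).2 (Or.inr hw)
      rw [hCde] at hmem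
      rcases Finset.mem_insert.1 hmem with h' | h'
      · exact absurd (by rw [← h'] at hw; exact hw) (G.irrefl)
      · rw [Finset.mem_singleton] at h'
        exact congrArg Subtype.val h'
    choose r hrp hr1 hr2 using hnbr
    -- the two neighbours of dstar
    obtain ⟨e₁, e₂, he12, hF'⟩ : ∃ e₁ e₂ : {u : V // u ≠ p},
        e₁ ≠ e₂ ∧ (C dstar).erase dstar = {e₁, e₂} := by
      have hcE : ((C dstar).erase dstar).card = 2 := by
        rw [Finset.card_erase_of_mem (hself dstar), hdstar3]
      obtain ⟨a, b, hab, hset⟩ := Finset.card_eq_two.1 hcE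
      exact ⟨a, b, hab, hset⟩
    have he₁C : e₁ ∈ (C dstar).erase dstar := by
      rw [hF']; exact Finset.mem_insert_self _ _
    have he₂C : e₂ ∈ (C dstar).erase dstar := by
      rw [hF']; exact Finset.mem_insert_of_mem (Finset.mem_singleton_self _)
    have hadj1 : G.Adj ↑dstar ↑e₁ := by
      rcases (hCmem dstar e₁).1 (Finset.mem_of_mem_erase he₁C) with h' | h'
      · exact absurd h'.symm (Finset.mem_erase.1 he₁C).1
      · exact h'
    have hadj2 : G.Adj ↑dstar ↑e₂ := by
      rcases (hCmem dstar e₂).1 (Finset.mem_of_mem_erase he₂C) with h' | h'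
      · exact absurd h'.symm (Finset.mem_erase.1 he₂C).1
      · exact h'
    have hdrule : ∀ w : V, G.Adj ↑dstar w → w = ↑e₁ ∨ w = ↑e₂ := by
      intro w hw
      have hwp : w ≠ p := fun h' => hnadj dstar hdstarD (h' ▸ hw)
      have hmem : (⟨w, hwp⟩ : {u : V // u ≠ p}) ∈ (C dstar).erase dstar := by
        refine Finset.mem_erase.2 ⟨?_, (hCmem _ _).2 (Or.inr hw)⟩
        intro h'
        rw [← (congrArg Subtype.val h' : w = ↑dstar)] at hw
        exact G.irrefl hw
      rw [hF'] at hmem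
      rcases Finset.mem_insert.1 hmem with h' | h'
      · exact Or.inl (congrArg Subtype.val h')
      · rw [Finset.mem_singleton] at h'
        exact Or.inr (congrArg Subtype.val h')
    -- s's coverer must be dstar
    obtain ⟨us, ⟨husD, huscov⟩, -⟩ := hD ⟨s, hsp⟩
    have husadj0 : G.Adj ↑us s := by
      rcases huscov with h' | h'
      · exfalso
        have hval : (↑us : V) = s := congrArg Subtype.val h'
        exact hnadj us husD (G.adj_symm (by rw [hval]; exact hps))
      · exact h'
    set R : Finset V := (D.erase dstar).attach.image (fun dd => r dd.1 dd.2) with hR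
    have hRcard : R.card ≤ D.card - 1 := by
      have h1 := Finset.card_image_le (s := (D.erase dstar).attach) (f := fun dd => r dd.1 dd.2)
      rw [Finset.card_attach, Finset.card_erase_of_mem hdstarD] at h1
      exact h1
    have hRmem : ∀ (d : {u : V // u ≠ p}) (hd : d ∈ D.erase dstar), r d hd ∈ R := by
      intro d hd
      exact Finset.mem_image.2 ⟨⟨d, hd⟩, Finset.mem_attach _ _, rfl⟩
    have hRcov : ∀ (v : V) (hv : v ≠ p) (d : {u : V // u ≠ p}),
        (⟨v, hv⟩ : {u : V // u ≠ p}) ∈ C d → ∀ hd : d ∈ D.erase dstar,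
        ∃ t ∈ R, t = v ∨ G.Adj t v := by
      intro v hv d hmem hd
      refine ⟨r d hd, hRmem d hd, ?_⟩
      rcases (hCmem _ _).1 hmem with h' | h'
      · right
        have hval : (↑d : V) = v := congrArg Subtype.val h'
        rw [← hval]
        exact G.adj_symm (hr1 d hd)
      · exact Or.inl (hr2 d hd v h').symm
    have hustar : us = dstar := by
      by_contra hne
      have hus' : us ∈ D.erase dstar := Finset.mem_erase.2 ⟨hne, husD⟩
      have hsr : s = r us hus' := hr2 us hus' s husadj0
      have hdom : IsDomSet G (insert ↑dstar R) := by
        intro v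
        by_cases hv : v = p
        · refine ⟨s, Finset.mem_insert_of_mem (by rw [hsr]; exact hRmem us hus'),
            Or.inr (by rw [hv]; exact G.adj_symm hps)⟩
        · obtain ⟨d, ⟨hdD, hdcov⟩, -⟩ := hD ⟨v, hv⟩
          have hmemC : (⟨v, hv⟩ : {u : V // u ≠ p}) ∈ C d := (hCmem _ _).2 (by
            rcases hdcov with h' | h'
            · exact Or.inl h'
            · exact Or.inr h')
          by_cases hdd : d = dstar
          · subst hdd
            refine ⟨↑d, Finset.mem_insert_self _ _, ?_⟩
            rcases (hCmem _ _).1 hmemC with h' | h'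
            · exact Or.inl (congrArg Subtype.val h')
            · exact Or.inr h'
          · obtain ⟨t, ht, htcov⟩ := hRcov v hv d hmemC (Finset.mem_erase.2 ⟨hdd, hdD⟩)
            exact ⟨t, Finset.mem_insert_of_mem ht, htcov⟩
      have hle := domNum_le G hdom
      have hc := Finset.card_insert_le (↑dstar : V) R
      have hDpos : 0 < D.card := Finset.card_pos.2 ⟨dstar, hdstarD⟩
      omega
    have husadj : G.Adj ↑dstar s := by rw [← hustar]; exact husadj0
    have hsab : s = ↑e₁ ∨ s = ↑e₂ := hdrule s husadj
    obtain ⟨b', hb'adj, hb'ne_s, hb'rule, hb'p⟩ : ∃ b' : V, G.Adj ↑dstar b' ∧ b' ≠ s ∧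
        (∀ w : V, G.Adj ↑dstar w → w = s ∨ w = b') ∧ b' ≠ p := by
      rcases hsab with hsa | hsb
      · refine ⟨↑e₂, hadj2, ?_, ?_, e₂.prop⟩
        · intro h'
          exact he12 (Subtype.coe_injective (hsa.symm.trans h'.symm))
        · intro w hw
          rcases hdrule w hw with h' | h'
          · exact Or.inl (h'.trans hsa.symm)
          · exact Or.inr h'
      · refine ⟨↑e₁, hadj1, ?_, ?_, e₁.prop⟩
        · intro h'
          exact he12 (Subtype.coe_injective (h'.trans hsb))
        · intro w hw
          rcases hdrule w hw with h' | h'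
          · exact Or.inr h'
          · exact Or.inl (h'.trans hsb.symm)
    have hb'pend : ∀ w : V, G.Adj b' w → w = ↑dstar := by
      intro w₀ hw₀
      by_contra hw₀ne
      have hw₀p : w₀ ≠ p := by
        intro h'
        rw [h'] at hw₀
        exact hb'ne_s (hpend b' (G.adj_symm hw₀))
      have hb'cov : ∃ t ∈ insert s R, t = b' ∨ G.Adj t b' := by
        obtain ⟨d₁, ⟨hd₁D, hd₁cov⟩, -⟩ := hD ⟨w₀, hw₀p⟩
        by_cases hdd : d₁ = dstar
        · subst hdd
          rcases hd₁cov with h' | h'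
          · exact absurd (congrArg Subtype.val h').symm hw₀ne
          · rcases hb'rule w₀ h' with h'' | h''
            · refine ⟨s, Finset.mem_insert_self _ _, Or.inr ?_⟩
              rw [← h'']
              exact G.adj_symm hw₀
            · rw [h''] at hw₀
              exact absurd hw₀ G.irrefl
        · have hd₁' : d₁ ∈ D.erase dstar := Finset.mem_erase.2 ⟨hdd, hd₁D⟩
          rcases hd₁cov with h' | h'
          · have hval : (↑d₁ : V) = w₀ := congrArg Subtype.val h'
            have hbr : b' = r d₁ hd₁' := hr2 d₁ hd₁' b' (by rw [hval]; exact G.adj_symm hw₀)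
            exact ⟨r d₁ hd₁', Finset.mem_insert_of_mem (hRmem d₁ hd₁'), Or.inl hbr.symm⟩
          · have hwr : w₀ = r d₁ hd₁' := hr2 d₁ hd₁' w₀ h'
            refine ⟨r d₁ hd₁', Finset.mem_insert_of_mem (hRmem d₁ hd₁'), Or.inr ?_⟩
            rw [← hwr]
            exact G.adj_symm hw₀
      have hdom : IsDomSet G (insert s R) := by
        intro v
        by_cases hv : v = p
        · exact ⟨s, Finset.mem_insert_self _ _, Or.inr (by rw [hv]; exact G.adj_symm hps)⟩
        · obtain ⟨d, ⟨hdD, hdcov⟩, -⟩ := hD ⟨v, hv⟩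
          have hmemC : (⟨v, hv⟩ : {u : V // u ≠ p}) ∈ C d := (hCmem _ _).2 (by
            rcases hdcov with h' | h'
            · exact Or.inl h'
            · exact Or.inr h')
          by_cases hdd : d = dstar
          · subst hdd
            rcases (hCmem _ _).1 hmemC with h' | h'
            · refine ⟨s, Finset.mem_insert_self _ _, Or.inr ?_⟩
              have hval : (↑d : V) = v := congrArg Subtype.val h'
              rw [← hval]
              exact G.adj_symm husadj
            · rcases hb'rule v h' with h'' | h''
              · exact ⟨s, Finset.mem_insert_self _ _, Or.inl h''.symm⟩
              · obtain ⟨t, ht, htcov⟩ := hb'cov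
                refine ⟨t, ht, ?_⟩
                rw [h'']
                exact htcov
          · obtain ⟨t, ht, htcov⟩ := hRcov v hv d hmemC (Finset.mem_erase.2 ⟨hdd, hdD⟩)
            exact ⟨t, Finset.mem_insert_of_mem ht, htcov⟩
      have hle := domNum_le G hdom
      have hc := Finset.card_insert_le s R
      have hDpos : 0 < D.card := Finset.card_pos.2 ⟨dstar, hdstarD⟩
      omega
    -- distinctness facts
    have hs_ne_val : ∀ (d : {u : V // u ≠ p}) (hd : d ∈ D.erase dstar), (↑d : V) ≠ s := by
      intro d hd h'
      have h1 : (⟨s, hsp⟩ : {u : V // u ≠ p}) ∈ C d := (hCmem _ _).2 (Or.inl (Subtype.ext h'))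
      have h2 : (⟨s, hsp⟩ : {u : V // u ≠ p}) ∈ C dstar := (hCmem _ _).2 (Or.inr husadj)
      exact (Finset.mem_erase.1 hd).1 (huniq _ _ _ (Finset.mem_of_mem_erase hd) hdstarD h1 h2)
    have hs_ne_r : ∀ (d : {u : V // u ≠ p}) (hd : d ∈ D.erase dstar), r d hd ≠ s := by
      intro d hd h'
      have hadj' : G.Adj ↑d s := h' ▸ hr1 d hd
      have h1 : (⟨s, hsp⟩ : {u : V // u ≠ p}) ∈ C d := (hCmem _ _).2 (Or.inr hadj')
      have h2 : (⟨s, hsp⟩ : {u : V // u ≠ p}) ∈ C dstar := (hCmem _ _).2 (Or.inr husadj)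
      exact (Finset.mem_erase.1 hd).1 (huniq _ _ _ (Finset.mem_of_mem_erase hd) hdstarD h1 h2)
    have hs_ne_dstar : s ≠ ↑dstar := fun h' => G.irrefl (h' ▸ husadj)
    have hb'_star_ne : ∀ (v : V) (hv : v ≠ p), (v = b' ∨ v = ↑dstar) →
        ∀ (d : {u : V // u ≠ p}) (hd : d ∈ D.erase dstar), (v = ↑d ∨ v = r d hd) → False := by
      intro v hv hv1 d hd hv2
      have h1 : (⟨v, hv⟩ : {u : V // u ≠ p}) ∈ C dstar := (hCmem _ _).2 (by
        rcases hv1 with rfl | rfl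
        · exact Or.inr hb'adj
        · exact Or.inl (Subtype.ext rfl))
      have h2 : (⟨v, hv⟩ : {u : V // u ≠ p}) ∈ C d := (hCmem _ _).2 (by
        rcases hv2 with rfl | rfl
        · exact Or.inl (Subtype.ext rfl)
        · exact Or.inr (hr1 d hd))
      exact (Finset.mem_erase.1 hd).1 (huniq _ _ _ (Finset.mem_of_mem_erase hd) hdstarD h2 h1)
    -- build the EDS of G
    apply h.1
    refine ⟨insert p (insert b' ((D.erase dstar).image Subtype.val)), fun v => ?_⟩
    have hcovfacts : ∀ y, y ∈ insert p (insert b' ((D.erase dstar).image Subtype.val)) →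
        (y = v ∨ G.Adj y v) →
        (y = p ∧ (v = p ∨ v = s)) ∨ (y = b' ∧ (v = b' ∨ v = ↑dstar)) ∨
          (∃ d, ∃ hd : d ∈ D.erase dstar, y = ↑d ∧ (v = ↑d ∨ v = r d hd)) := by
      intro y hy hcov
      rcases Finset.mem_insert.1 hy with rfl | hy'
      · refine Or.inl ⟨rfl, ?_⟩
        rcases hcov with h' | h'
        · exact Or.inl h'.symm
        · exact Or.inr (hpend v h')
      rcases Finset.mem_insert.1 hy' with rfl | hy''
      · refine Or.inr (Or.inl ⟨rfl, ?_⟩)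
        rcases hcov with h' | h'
        · exact Or.inl h'.symm
        · exact Or.inr (hb'pend v h')
      · obtain ⟨d, hd, rfl⟩ := Finset.mem_image.1 hy''
        refine Or.inr (Or.inr ⟨d, hd, rfl, ?_⟩)
        rcases hcov with h' | h'
        · exact Or.inl h'.symm
        · exact Or.inr (hr2 d hd v h')
    have hex : ∃ u ∈ insert p (insert b' ((D.erase dstar).image Subtype.val)),
        u = v ∨ G.Adj u v := by
      by_cases hv : v = p
      · exact ⟨p, Finset.mem_insert_self _ _, Or.inl hv.symm⟩
      · obtain ⟨d, ⟨hdD, hdcov⟩, -⟩ := hD ⟨v, hv⟩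
        by_cases hdd : d = dstar
        · subst hdd
          rcases hdcov with h' | h'
          · refine ⟨b', Finset.mem_insert_of_mem (Finset.mem_insert_self _ _), Or.inr ?_⟩
            have hval : (↑d : V) = v := congrArg Subtype.val h'
            rw [← hval]
            exact G.adj_symm hb'adj
          · rcases hb'rule v h' with h'' | h''
            · exact ⟨p, Finset.mem_insert_self _ _, Or.inr (by rw [h'']; exact hps)⟩
            · exact ⟨b', Finset.mem_insert_of_mem (Finset.mem_insert_self _ _), Or.inl h''.symm⟩
        · refine ⟨↑d, Finset.mem_insert_of_mem (Finset.mem_insert_of_mem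
            (Finset.mem_image_of_mem _ (Finset.mem_erase.2 ⟨hdd, hdD⟩))), ?_⟩
          rcases hdcov with h' | h'
          · exact Or.inl (congrArg Subtype.val h')
          · exact Or.inr h'
    obtain ⟨u, hu, hucov⟩ := hex
    refine ⟨u, ⟨hu, hucov⟩, ?_⟩
    rintro y ⟨hy, hycov⟩
    rcases hcovfacts u hu hucov with ⟨hup, hvc⟩ | ⟨hub, hvc⟩ | ⟨d, hd, hud, hvc⟩ <;>
      rcases hcovfacts y hy hycov with ⟨hyp, hvc'⟩ | ⟨hyb, hvc'⟩ | ⟨d', hd', hyd, hvc'⟩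
    · rw [hyp, hup]
    · exfalso
      rcases hvc with rfl | rfl
      · rcases hvc' with h' | h'
        · exact hb'p h'.symm
        · exact dstar.prop h'.symm
      · rcases hvc' with h' | h'
        · exact hb'ne_s h'.symm
        · exact hs_ne_dstar h'
    · exfalso
      rcases hvc with rfl | rfl
      · rcases hvc' with h' | h'
        · exact d'.prop h'.symm
        · exact hrp d' hd' h'.symm
      · rcases hvc' with h' | h'
        · exact hs_ne_val d' hd' h'.symm
        · exact hs_ne_r d' hd' h'.symm
    · exfalso
      rcases hvc' with rfl | rfl
      · rcases hvc with h' | h'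
        · exact hb'p h'.symm
        · exact dstar.prop h'.symm
      · rcases hvc with h' | h'
        · exact hb'ne_s h'.symm
        · exact hs_ne_dstar h'
    · rw [hyb, hub]
    · exfalso
      have hv : v ≠ p := by
        rcases hvc' with rfl | rfl
        · exact d'.prop
        · exact hrp d' hd'
      exact hb'_star_ne v hv hvc d' hd' hvc'
    · exfalso
      rcases hvc' with rfl | rfl
      · rcases hvc with h' | h'
        · exact d.prop h'.symm
        · exact hrp d hd h'.symm
      · rcases hvc with h' | h'
        · exact hs_ne_val d hd h'.symm
        · exact hs_ne_r d hd h'.symm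
    · exfalso
      have hv : v ≠ p := by
        rcases hvc with rfl | rfl
        · exact d.prop
        · exact hrp d hd
      exact hb'_star_ne v hv hvc' d hd hvc
    · have hv : v ≠ p := by
        rcases hvc with rfl | rfl
        · exact d.prop
        · exact hrp d hd
      have hm1 : (⟨v, hv⟩ : {u : V // u ≠ p}) ∈ C d := (hCmem _ _).2 (by
        rcases hvc with rfl | rfl
        · exact Or.inl (Subtype.ext rfl)
        · exact Or.inr (hr1 d hd))
      have hm2 : (⟨v, hv⟩ : {u : V // u ≠ p}) ∈ C d' := (hCmem _ _).2 (by
        rcases hvc' with rfl | rfl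
        · exact Or.inl (Subtype.ext rfl)
        · exact Or.inr (hr1 d' hd'))
      have hdd' := huniq ⟨v, hv⟩ d d' (Finset.mem_of_mem_erase hd) (Finset.mem_of_mem_erase hd') hm1 hm2
      rw [hyd, hud, hdd']
  · -- case (ii): s is the pendant neighbour of p, i.e. {p,s} is a K2 component
    have hs : (↑d₀ : V) = s := hpend _ (G.adj_symm hd₀adj)
    -- C d₀ = {d₀}
    have hCd₀ : C d₀ = {d₀} := by
      apply Finset.eq_singleton_iff_unique_mem.2
      refine ⟨hself d₀, fun v hv => ?_⟩
      rcases (hCmem d₀ v).1 hv with h' | h'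
      · exact h'.symm
      · exact absurd (hd₀pend ↑v h') v.prop
    -- every other member has a unique neighbour
    have hvalne : ∀ d ∈ D.erase d₀, ¬ G.Adj ↑d p := by
      intro d hd hadj
      have : (↑d : V) = s := hpend _ (G.adj_symm hadj)
      have : d = d₀ := Subtype.ext (this.trans hs.symm)
      exact (Finset.mem_erase.1 hd).1 this
    have hge2 : ∀ d ∈ D.erase d₀, 2 ≤ (C d).card := by
      intro d hd
      obtain ⟨w, hw⟩ := hiso ↑d
      have hwp : w ≠ p := fun h' => hvalne d hd (h' ▸ hw)
      have hmem : (⟨w, hwp⟩ : {u : V // u ≠ p}) ∈ C d := (hCmem _ _).2 (Or.inr hw)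
      have hne : d ≠ ⟨w, hwp⟩ := fun h' => G.irrefl (by
        have : (↑d : V) = w := congrArg Subtype.val h'
        exact this ▸ hw)
      exact Finset.one_lt_card.2 ⟨d, hself d, ⟨w, hwp⟩, hmem, hne⟩
    have hsumC : ∑ d ∈ D, (C d).card = 2 * domNum G - 1 := hsum
    have herase2 : ∀ d ∈ D.erase d₀, (C d).card = 2 := by
      apply sum_all_two hge2
      have hadd : ∑ d ∈ D.erase d₀, (C d).card + (C d₀).card = ∑ d ∈ D, (C d).card :=
        Finset.sum_erase_add D _ hd₀D
      have h1 : (C d₀).card = 1 := by rw [hCd₀]; exact Finset.card_singleton d₀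
      have hce : (D.erase d₀).card = D.card - 1 := Finset.card_erase_of_mem hd₀D
      have hDpos : 0 < D.card := Finset.card_pos.2 ⟨d₀, hd₀D⟩
      omega
    have hnbr : ∀ d ∈ D.erase d₀, ∃ r : V, r ≠ p ∧ G.Adj ↑d r ∧ ∀ w : V, G.Adj ↑d w → w = r := by
      intro d hd
      obtain ⟨e, he, hed⟩ : ∃ e ∈ C d, e ≠ d := by
        have h2 := herase2 d hd
        have h21 : 1 < (C d).card := by omega
        rcases Finset.one_lt_card.1 h21 with ⟨a, ha, b, hb, hab⟩
        by_cases hda : a = d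
        · exact ⟨b, hb, fun h' => hab (by rw [hda, h'])⟩
        · exact ⟨a, ha, hda⟩
      have hadj_e : G.Adj ↑d ↑e := by
        rcases (hCmem d e).1 he with h' | h'
        · exact absurd h'.symm hed
        · exact h'
      have hcard2 : ({d, e} : Finset {u : V // u ≠ p}).card = 2 := by
        rw [Finset.card_insert_of_notMem (by
          rw [Finset.mem_singleton]; exact fun h' => hed h'.symm), Finset.card_singleton]
      have hCde : C d = {d, e} := by
        refine (Finset.eq_of_subset_of_card_le ?_ ?_).symm
        · intro y hy
          rcases Finset.mem_insert.1 hy with rfl | hy'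
          · exact hself y
          · rw [Finset.mem_singleton] at hy'
            rw [hy']
            exact (hCmem d e).2 (Or.inr hadj_e)
        · rw [herase2 d hd, hcard2]
      refine ⟨↑e, e.prop, hadj_e, ?_⟩
      intro w hw
      have hwp : w ≠ p := fun h' => hvalne d hd (h' ▸ hw)
      have hmem : (⟨w, hwp⟩ : {u : V // u ≠ p}) ∈ C d := (hCmem _ _).2 (Or.inr hw)
      rw [hCde] at hmem
      rcases Finset.mem_insert.1 hmem with h' | h'
      · exact absurd (by rw [← h'] at hw; exact hw) (G.irrefl)
      · rw [Finset.mem_singleton] at h'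
        exact congrArg Subtype.val h'
    choose r hrp hr1 hr2 using hnbr
    -- distinctness facts
    have hval_ne_s : ∀ d (hd : d ∈ D.erase d₀), (↑d : V) ≠ s := by
      intro d hd h'
      exact (Finset.mem_erase.1 hd).1 (Subtype.ext (h'.trans hs.symm))
    have hr_ne_s : ∀ d (hd : d ∈ D.erase d₀), r d hd ≠ s := by
      intro d hd h'
      have hadj := hr1 d hd
      rw [h'] at hadj
      have : (↑d : V) = p := by
        have := hd₀pend ↑d (by rw [hs]; exact G.adj_symm hadj)
        exact this
      exact d.prop this
    -- the EDS of G
    apply h.1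
    refine ⟨insert p ((D.erase d₀).image Subtype.val), fun v => ?_⟩
    have hcovfacts : ∀ y, y ∈ insert p ((D.erase d₀).image Subtype.val) →
        (y = v ∨ G.Adj y v) → (y = p ∧ (v = p ∨ v = s)) ∨
          (∃ d, ∃ hd : d ∈ D.erase d₀, y = ↑d ∧ (v = ↑d ∨ v = r d hd)) := by
      intro y hy hcov
      rcases Finset.mem_insert.1 hy with rfl | hy'
      · left
        refine ⟨rfl, ?_⟩
        rcases hcov with h' | h'
        · exact Or.inl h'.symm
        · exact Or.inr (hpend v h')
      · obtain ⟨d, hd, rfl⟩ := Finset.mem_image.1 hy'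
        right
        refine ⟨d, hd, rfl, ?_⟩
        rcases hcov with h' | h'
        · exact Or.inl h'.symm
        · exact Or.inr (hr2 d hd v h')
    -- existence
    have hex : ∃ u ∈ insert p ((D.erase d₀).image Subtype.val), u = v ∨ G.Adj u v := by
      by_cases hv : v = p
      · exact ⟨p, Finset.mem_insert_self _ _, Or.inl hv.symm⟩
      · obtain ⟨d, ⟨hdD, hdcov⟩, -⟩ := hD ⟨v, hv⟩
        by_cases hdd : d = d₀
        · subst hdd
          rcases hdcov with h' | h'
          · have hvs : v = s := by rw [← hs]; exact (congrArg Subtype.val h').symm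
            exact ⟨p, Finset.mem_insert_self _ _, Or.inr (by rw [hvs]; exact hps)⟩
          · exact absurd (hd₀pend v h') hv
        · refine ⟨↑d, Finset.mem_insert_of_mem
            (Finset.mem_image_of_mem _ (Finset.mem_erase.2 ⟨hdd, hdD⟩)), ?_⟩
          rcases hdcov with h' | h'
          · exact Or.inl (congrArg Subtype.val h')
          · exact Or.inr h'
    obtain ⟨u, hu, hucov⟩ := hex
    refine ⟨u, ⟨hu, hucov⟩, ?_⟩
    rintro y ⟨hy, hycov⟩
    -- uniqueness
    rcases hcovfacts u hu hucov with ⟨hup, hvc⟩ | ⟨d, hd, hud, hvc⟩ <;>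
      rcases hcovfacts y hy hycov with ⟨hyp, hvc'⟩ | ⟨d', hd', hyd, hvc'⟩
    · rw [hyp, hup]
    · -- y = ↑d', u = p : contradiction
      exfalso
      rcases hvc with rfl | rfl
      · rcases hvc' with h' | h'
        · exact d'.prop h'.symm
        · exact hrp d' hd' h'.symm
      · rcases hvc' with h' | h'
        · exact hval_ne_s d' hd' h'.symm
        · exact hr_ne_s d' hd' h'.symm
    · exfalso
      rcases hvc' with rfl | rfl
      · rcases hvc with h' | h'
        · exact d.prop h'.symm
        · exact hrp d hd h'.symm
      · rcases hvc with h' | h'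
        · exact hval_ne_s d hd h'.symm
        · exact hr_ne_s d hd h'.symm
    · -- both members: use uniqueness of coverer
      have hvp : v ≠ p := by
        rcases hvc with rfl | rfl
        · exact d.prop
        · exact hrp d hd
      have hm1 : (⟨v, hvp⟩ : {u : V // u ≠ p}) ∈ C d := by
        apply (hCmem _ _).2
        rcases hvc with rfl | rfl
        · exact Or.inl (Subtype.ext rfl)
        · exact Or.inr (hr1 d hd)
      have hm2 : (⟨v, hvp⟩ : {u : V // u ≠ p}) ∈ C d' := by
        apply (hCmem _ _).2
        rcases hvc' with rfl | rfl
        · exact Or.inl (Subtype.ext rfl)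
        · exact Or.inr (hr1 d' hd')
      have := huniq ⟨v, hvp⟩ d d' (Finset.mem_of_mem_erase hd) (Finset.mem_of_mem_erase hd') hm1 hm2
      rw [hyd, hud, this]

end layer4
section layer5
variable [Fintype V] [DecidableEq V] (G : SimpleGraph V)

lemma main_iso (h : HypoED G) (heq : 2 * domNum G = Fintype.card V) :
    Nonempty (G ≃g cycleGraph 4) := by
  classical
  have hiso := hypoED_no_isolated G h
  have hγ2 := two_le_domNum' G h.1
  have htwo : ∀ v : V, ∃ w₁ w₂ : V, w₁ ≠ w₂ ∧ G.Adj v w₁ ∧ G.Adj v w₂ := by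
    intro v
    obtain ⟨w, hw⟩ := hiso v
    by_cases hpd : ∀ u, G.Adj v u → u = w
    · exact (no_pendant G h heq hw hpd).elim
    · push_neg at hpd
      obtain ⟨u, hu, huw⟩ := hpd
      exact ⟨u, w, huw, hu, hw⟩
  have hV : Nonempty V := by
    by_contra hV
    rw [not_nonempty_iff] at hV
    exact h.1 ⟨∅, fun v => (IsEmpty.false v).elim⟩
  obtain ⟨x₀⟩ := hV
  obtain ⟨D, hD⟩ := h.2 x₀
  haveI : DecidableRel (vdel G x₀).Adj := fun a b => Classical.dec _
  rcases dichotomy G h heq hD with ⟨hcard, hnadj⟩ | ⟨-, d₀, -, hd₀adj, hd₀pend⟩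
  swap
  · exact (no_pendant G h heq hd₀adj hd₀pend).elim
  have hcardW : Fintype.card {u : V // u ≠ x₀} = 2 * domNum G - 1 := by
    rw [card_subtype_ne]; omega
  have hsum := eds_sum (vdel G x₀) D hD
  rw [hcardW] at hsum
  set C : {u : V // u ≠ x₀} → Finset {u : V // u ≠ x₀} :=
    fun d => Finset.univ.filter (fun v => d = v ∨ (vdel G x₀).Adj d v) with hC
  have hCmem : ∀ d v, v ∈ C d ↔ (d = v ∨ G.Adj ↑d ↑v) := by
    intro d v
    rw [hC]
    simp only [Finset.mem_filter, Finset.mem_univ, true_and]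
    exact Iff.rfl
  have hsumC : ∑ d ∈ D, (C d).card = 2 * domNum G - 1 := hsum
  have hge3 : ∀ d ∈ D, 3 ≤ (C d).card := by
    intro d hd
    obtain ⟨w₁, w₂, hww, h1, h2⟩ := htwo ↑d
    have hw₁p : w₁ ≠ x₀ := fun h' => hnadj d hd (h' ▸ h1)
    have hw₂p : w₂ ≠ x₀ := fun h' => hnadj d hd (h' ▸ h2)
    have hd1 : d ≠ ⟨w₁, hw₁p⟩ := fun h' => G.irrefl (by
      have h2' : (↑d : V) = w₁ := congrArg Subtype.val h'
      exact h2' ▸ h1)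
    have hd2 : d ≠ ⟨w₂, hw₂p⟩ := fun h' => G.irrefl (by
      have h2' : (↑d : V) = w₂ := congrArg Subtype.val h'
      exact h2' ▸ h2)
    have h12 : (⟨w₁, hw₁p⟩ : {u : V // u ≠ x₀}) ≠ ⟨w₂, hw₂p⟩ := by
      intro h'
      exact hww (congrArg Subtype.val h')
    have hsub : ({d, ⟨w₁, hw₁p⟩, ⟨w₂, hw₂p⟩} : Finset {u : V // u ≠ x₀}) ⊆ C d := by
      intro y hy
      rcases Finset.mem_insert.1 hy with h' | hy'
      · rw [h']
        exact (hCmem d d).2 (Or.inl rfl)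
      rcases Finset.mem_insert.1 hy' with h' | hy''
      · rw [h']
        exact (hCmem d _).2 (Or.inr h1)
      · rw [Finset.mem_singleton] at hy''
        rw [hy'']
        exact (hCmem d _).2 (Or.inr h2)
    have hc3 : ({d, ⟨w₁, hw₁p⟩, ⟨w₂, hw₂p⟩} : Finset {u : V // u ≠ x₀}).card = 3 := by
      rw [Finset.card_insert_of_notMem (by
        simp only [Finset.mem_insert, Finset.mem_singleton]
        push_neg
        exact ⟨hd1, hd2⟩),
        Finset.card_insert_of_notMem (by rw [Finset.mem_singleton]; exact h12),
        Finset.card_singleton]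
    calc 3 = ({d, ⟨w₁, hw₁p⟩, ⟨w₂, hw₂p⟩} : Finset {u : V // u ≠ x₀}).card := hc3.symm
    _ ≤ (C d).card := Finset.card_le_card hsub
  have hsmul : D.card • 3 ≤ ∑ d ∈ D, (C d).card :=
    Finset.card_nsmul_le_sum _ _ _ hge3
  rw [smul_eq_mul] at hsmul
  have hγ : domNum G = 2 := by omega
  have hn4 : Fintype.card V = 4 := by omega
  have hD1 : D.card = 1 := by omega
  obtain ⟨c, hc⟩ := Finset.card_eq_one.1 hD1
  have hccov : ∀ (v : V) (hv : v ≠ x₀), (↑c : V) = v ∨ G.Adj ↑c v := by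
    intro v hv
    obtain ⟨d, ⟨hdD, hdcov⟩, -⟩ := hD ⟨v, hv⟩
    rw [hc, Finset.mem_singleton] at hdD
    subst hdD
    rcases hdcov with h' | h'
    · exact Or.inl (congrArg Subtype.val h')
    · exact Or.inr h'
  have hcx : ¬ G.Adj ↑c x₀ := hnadj c (by rw [hc]; exact Finset.mem_singleton_self c)
  have hnotall : ∀ v : V, ∃ u, u ≠ v ∧ ¬ G.Adj v u := by
    intro v
    by_contra hall
    push_neg at hall
    have hdom : IsDomSet G {v} := by
      intro u
      by_cases huv : u = v
      · exact ⟨v, Finset.mem_singleton_self v, Or.inl huv.symm⟩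
      · exact ⟨v, Finset.mem_singleton_self v, Or.inr (hall u huv)⟩
    have hle := domNum_le G hdom
    rw [Finset.card_singleton] at hle
    omega
  obtain ⟨y, z, hyz, hxy, hxz⟩ := htwo x₀
  have hyx : y ≠ x₀ := fun h' => G.irrefl (h' ▸ hxy)
  have hzx : z ≠ x₀ := fun h' => G.irrefl (h' ▸ hxz)
  have hyc : y ≠ ↑c := fun h' => hcx (G.adj_symm (h' ▸ hxy))
  have hzc : z ≠ ↑c := fun h' => hcx (G.adj_symm (h' ▸ hxz))
  have hcx' : (↑c : V) ≠ x₀ := c.prop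
  have hcy : G.Adj ↑c y := by
    rcases hccov y hyx with h' | h'
    · exact absurd h'.symm hyc
    · exact h'
  have hcz : G.Adj ↑c z := by
    rcases hccov z hzx with h' | h'
    · exact absurd h'.symm hzc
    · exact h'
  have hnm1 : x₀ ∉ ({y, ↑c, z} : Finset V) := by
    simp only [Finset.mem_insert, Finset.mem_singleton]
    push_neg
    exact ⟨fun h' => hyx h'.symm, fun h' => hcx' h'.symm, fun h' => hzx h'.symm⟩
  have hnm2 : y ∉ ({↑c, z} : Finset V) := by
    simp only [Finset.mem_insert, Finset.mem_singleton]
    push_neg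
    exact ⟨hyc, hyz⟩
  have hnm3 : (↑c : V) ∉ ({z} : Finset V) := by
    rw [Finset.mem_singleton]
    exact fun h' => hzc h'.symm
  have hdist4 : ({x₀, y, ↑c, z} : Finset V).card = 4 := by
    rw [Finset.card_insert_of_notMem hnm1, Finset.card_insert_of_notMem hnm2,
      Finset.card_insert_of_notMem hnm3, Finset.card_singleton]
  have huniv0 : ({x₀, y, ↑c, z} : Finset V) = Finset.univ :=
    Finset.eq_univ_of_card _ (by rw [hdist4, hn4])
  have huniv : ∀ v : V, v = x₀ ∨ v = y ∨ v = ↑c ∨ v = z := by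
    intro v
    have hv : v ∈ ({x₀, y, ↑c, z} : Finset V) := by rw [huniv0]; exact Finset.mem_univ v
    simpa only [Finset.mem_insert, Finset.mem_singleton] using hv
  have hyznadj : ¬ G.Adj y z := by
    intro hadj
    obtain ⟨u, hune, hunadj⟩ := hnotall y
    rcases huniv u with rfl | rfl | rfl | rfl
    · exact hunadj (G.adj_symm hxy)
    · exact hune rfl
    · exact hunadj (G.adj_symm hcy)
    · exact hunadj hadj
  -- build the equivalence
  set f : V → Fin 4 := fun v => if v = x₀ then 0 else if v = y then 1 else if v = ↑c then 2 else 3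
    with hf
  have hzy : z ≠ y := fun h' => hyz h'.symm
  have hcy' : (↑c : V) ≠ y := fun h' => hyc h'.symm
  have hf0 : f x₀ = 0 := by simp [hf]
  have hf1 : f y = 1 := by simp [hf, hyx]
  have hf2 : f ↑c = 2 := by simp [hf, hcx', hcy']
  have hf3 : f z = 3 := by simp [hf, hzx, hzy, hzc]
  have hinj : Function.Injective f := by
    intro a b hab
    rcases huniv a with rfl | rfl | rfl | rfl <;> rcases huniv b with rfl | rfl | rfl | rfl <;>
      simp only [hf0, hf1, hf2, hf3] at hab <;>
      first
      | rfl
      | exact absurd hab (by decide)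
  have hbij : Function.Bijective f :=
    (Fintype.bijective_iff_injective_and_card f).2 ⟨hinj, by rw [hn4, Fintype.card_fin]⟩
  let e : V ≃ Fin 4 := Equiv.ofBijective f hbij
  have he0 : e x₀ = 0 := hf0
  have he1 : e y = 1 := hf1
  have he2 : e ↑c = 2 := hf2
  have he3 : e z = 3 := hf3
  refine ⟨⟨e, ?_⟩⟩
  intro a b
  rcases huniv a with rfl | rfl | rfl | rfl <;> rcases huniv b with rfl | rfl | rfl | rfl <;>
    simp only [he0, he1, he2, he3] <;>
    first
    | exact iff_of_false (by decide) G.irrefl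
    | exact iff_of_true (by decide) hxy
    | exact iff_of_true (by decide) hxz
    | exact iff_of_true (by decide) hcy
    | exact iff_of_true (by decide) hcz
    | exact iff_of_true (by decide) (G.adj_symm hxy)
    | exact iff_of_true (by decide) (G.adj_symm hxz)
    | exact iff_of_true (by decide) (G.adj_symm hcy)
    | exact iff_of_true (by decide) (G.adj_symm hcz)
    | exact iff_of_false (by decide) hcx
    | exact iff_of_false (by decide) (fun hh => hcx (G.adj_symm hh))
    | exact iff_of_false (by decide) hyznadj
    | exact iff_of_false (by decide) (fun hh => hyznadj (G.adj_symm hh))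

lemma iso_gives (h2 : 2 ≤ domNum G) (φ : G ≃g cycleGraph 4) :
    2 * domNum G = Fintype.card V := by
  have hcard4 : Fintype.card V = 4 := by
    rw [← Fintype.card_fin 4]
    exact Fintype.card_congr φ.toEquiv
  have hfin : ∀ i : Fin 4, i = 0 ∨ i = 1 ∨ i = 2 ∨ i = 3 := by decide
  have hdom : IsDomSet G {φ.symm 0, φ.symm 1} := by
    intro v
    have hmem0 : φ.symm 0 ∈ ({φ.symm 0, φ.symm 1} : Finset V) := Finset.mem_insert_self _ _
    have hmem1 : φ.symm 1 ∈ ({φ.symm 0, φ.symm 1} : Finset V) :=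
      Finset.mem_insert_of_mem (Finset.mem_singleton_self _)
    have key : ∀ i : Fin 4, (cycleGraph 4).Adj i (φ v) → G.Adj (φ.symm i) v := by
      intro i hi
      apply φ.map_adj_iff.1
      rw [RelIso.apply_symm_apply]
      exact hi
    rcases hfin (φ v) with h0 | h1' | h2' | h3'
    · refine ⟨φ.symm 0, hmem0, Or.inl ?_⟩
      rw [← h0]
      exact φ.toEquiv.symm_apply_apply v
    · refine ⟨φ.symm 1, hmem1, Or.inl ?_⟩
      rw [← h1']
      exact φ.toEquiv.symm_apply_apply v
    · exact ⟨φ.symm 1, hmem1, Or.inr (key 1 (by rw [h2']; decide))⟩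
    · exact ⟨φ.symm 0, hmem0, Or.inr (key 0 (by rw [h3']; decide))⟩
  have hle := domNum_le G hdom
  have hcle : ({φ.symm 0, φ.symm 1} : Finset V).card ≤ 2 :=
    le_trans (Finset.card_insert_le _ _) (by simp)
  omega

end layer5

theorem hypoED_domNum_bounds [Fintype V] [DecidableEq V] (G : SimpleGraph V)
    (h : HypoED G) :
    2 ≤ domNum G ∧ 2 * domNum G ≤ Fintype.card V ∧
      (2 * domNum G = Fintype.card V ↔ Nonempty (G ≃g cycleGraph 4)) := by
  have h2 := two_le_domNum' G h.1
  have hiso := hypoED_no_isolated G h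
  exact ⟨h2, two_mul_domNum_le G hiso,
    ⟨fun heq => main_iso G h heq, fun h' => h'.elim (fun φ => iso_gives G h2 φ)⟩⟩
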